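/- The PP and PG values of the 3x+1 algorithm are the reciprocals of those of the infinite-permutation algorithm: writing s(n) = (aₙ, bₙ) for the algorithm started at (2/3, 4/3) and t(n) = (cₙ, dₙ) for the same algorithm started at (1/2, 3/2), one has for every n that cₙ₊₁ = 1/bₙ and dₙ₊₁ = 1/aₙ. -/
import Mathlib


/-- One step of the PP/PG algorithm: replace the pair `(a, b)` by `(a·b, b)`
if `a·b < 1` and by `(a, a·b)` otherwise. -/
noncomputable def step (p : ℝ × ℝ) : ℝ × ℝ :=
  if p.1 * p.2 < 1 then (p.1 * p.2, p.2) else (p.1, p.1 * p.2)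

/-- The PP/PG algorithm for the original Collatz mapping (infinite permutations),
started at `(2/3, 4/3)`. -/
noncomputable def s : ℕ → ℝ × ℝ
  | 0 => (2 / 3, 4 / 3)
  | n + 1 => step (s n)

/-- The PP/PG algorithm for the `3x+1` mapping, started at `(1/2, 3/2)`. -/
noncomputable def t : ℕ → ℝ × ℝ
  | 0 => (1 / 2, 3 / 2)
  | n + 1 => step (t n)

lemma pow23_ne_one (i j : ℕ) (hj : 0 < j) : (2:ℝ)^i / 3^j ≠ 1 := by
  intro h
  have h3 : (0:ℝ) < 3 ^ j := by positivity
  have : (2:ℝ)^i = 3^j := by field_simp at h; linarith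
  have hnat : (2:ℕ)^i = 3^j := by exact_mod_cast this
  have h3d : 3 ∣ (2:ℕ)^i := hnat ▸ dvd_pow_self 3 hj.ne'
  have := Nat.Prime.dvd_of_dvd_pow (p := 3) (by norm_num) h3d
  norm_num at this

lemma s_form (n : ℕ) : ∃ i j k l : ℕ, (s n).1 = 2^i / 3^j ∧ (s n).2 = 2^k / 3^l
    ∧ 0 < j ∧ 0 < l := by
  induction n with
  | zero => exact ⟨1, 1, 2, 1, by norm_num [s], by norm_num [s], one_pos, one_pos⟩
  | succ n ih =>
    obtain ⟨i, j, k, l, h1, h2, hj, hl⟩ := ih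
    have hs : s (n + 1) = step (s n) := rfl
    rw [hs]
    unfold step
    split
    · exact ⟨i + k, j + l, k, l, by rw [h1, h2]; ring, h2, by omega, hl⟩
    · exact ⟨i, j, i + k, j + l, h1, by rw [h1, h2]; ring, hj, by omega⟩

lemma key (n : ℕ) : t (n + 1) = (1 / (s n).2, 1 / (s n).1) := by
  induction n with
  | zero =>
    show step (1/2, 3/2) = _
    norm_num [step, s]
  | succ n ih =>
    obtain ⟨i, j, k, l, h1, h2, hj, hl⟩ := s_form n
    have ha : (0:ℝ) < (s n).1 := by rw [h1]; positivity
    have hb : (0:ℝ) < (s n).2 := by rw [h2]; positivity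
    have hne : (s n).1 * (s n).2 ≠ 1 := by
      rw [h1, h2]
      have : (2:ℝ)^i / 3^j * (2^k / 3^l) = 2^(i+k) / 3^(j+l) := by
        rw [pow_add, pow_add]; ring
      rw [this]
      exact pow23_ne_one _ _ (by omega)
    show step (t (n + 1)) = _
    rw [ih]
    have hs : s (n + 1) = step (s n) := rfl
    rw [hs]
    unfold step
    rcases lt_or_gt_of_ne hne with h | h
    · -- s (n+1) = ((s n).1 * (s n).2, (s n).2)
      have hprod : ¬ (1 / (s n).2 * (1 / (s n).1) < 1) := by
        rw [div_mul_div_comm, one_mul]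
        rw [not_lt, le_div_iff₀ (by positivity), one_mul, mul_comm]
        exact h.le
      rw [if_neg hprod, if_pos h]
      simp [div_mul_div_comm, mul_comm]
    · have hprod : 1 / (s n).2 * (1 / (s n).1) < 1 := by
        rw [div_mul_div_comm, one_mul, div_lt_one (by positivity), mul_comm]
        exact h
      rw [if_pos hprod, if_neg (not_lt.2 h.le)]
      simp [div_mul_div_comm, mul_comm]

/-- The PP and PG values of the `3x+1` algorithm are the reciprocals of those of
the infinite-permutation algorithm. -/
theorem t_reciprocal_s (n : ℕ) :
    (t (n + 1)).1 = 1 / (s n).2 ∧ (t (n + 1)).2 = 1 / (s n).1 := by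
  rw [key n]; exact ⟨rfl, rfl⟩
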